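/- arXiv:1203.6055 — 3 statements merged into one kernel-verified Lean document; each statement's English description precedes it below -/
import Mathlib

section
/- Index-reduction formula: for all integers a, b, c, d, r with a + b = c + d, F_a(x,y)·F_b(x,y) − F_c(x,y)·F_d(x,y) = (−y)^r · ( F_{a−r}(x,y)·F_{b−r}(x,y) − F_{c−r}(x,y)·F_{d−r}(x,y) ), where the F_n are the bivariate Fibonacci polynomials extended to all integer indices (y invertible). -/
/-- Bivariate Fibonacci polynomials. -/
def bF {K : Type*} [Field K] (x y : K) : ℕ → K
  | 0 => 0
  | 1 => 1
  | n + 2 => x * bF x y (n + 1) + y * bF x y n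

/-- Bivariate Fibonacci polynomials extended to all integer indices:
F_{-n} = -(-y)^{-n} F_n. -/
noncomputable def zF {K : Type*} [Field K] (x y : K) (n : ℤ) : K :=
  if 0 ≤ n then bF x y n.toNat else -((-y) ^ n) * bF x y (-n).toNat

lemma zF_natCast {K : Type*} [Field K] (x y : K) (n : ℕ) : zF x y (n : ℤ) = bF x y n := by
  simp [zF]

lemma zF_negCast {K : Type*} [Field K] (x y : K) (m : ℕ) :
    zF x y (-(m : ℤ) - 1) = -((-y) ^ (-(m : ℤ) - 1)) * bF x y (m + 1) := by
  have h : ¬ (0:ℤ) ≤ -(m:ℤ) - 1 := by omega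
  rw [zF, if_neg h]
  have h2 : (-(-(m:ℤ) - 1)).toNat = m + 1 := by omega
  rw [h2]

lemma zF_rec {K : Type*} [Field K] (x y : K) (hy : y ≠ 0) (n : ℤ) :
    zF x y (n + 1) = x * zF x y n + y * zF x y (n - 1) := by
  have hny : (-y) ≠ 0 := neg_ne_zero.mpr hy
  rcases le_or_gt 1 n with h1 | h1
  · obtain ⟨m, hm⟩ := Int.eq_ofNat_of_zero_le (by linarith : (0:ℤ) ≤ n - 1)
    have hn : n = (m : ℤ) + 1 := by omega
    subst hn
    rw [show ((m:ℤ) + 1 - 1) = ((m : ℕ) : ℤ) by ring,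
      show ((m:ℤ) + 1 + 1) = ((m + 2 : ℕ) : ℤ) by push_cast; ring,
      show ((m:ℤ) + 1) = ((m + 1 : ℕ) : ℤ) by push_cast; ring,
      zF_natCast, zF_natCast, zF_natCast]
    rfl
  · rcases le_or_gt n (-2) with h2 | h2
    · obtain ⟨m, hm⟩ := Int.eq_ofNat_of_zero_le (by linarith : (0:ℤ) ≤ -n - 2)
      have hn : n = -(m : ℤ) - 2 := by omega
      subst hn
      rw [show (-(m:ℤ) - 2 + 1) = -(m : ℤ) - 1 by ring,
        show (-(m:ℤ) - 2 - 1) = -((m + 2 : ℕ) : ℤ) - 1 by push_cast; ring,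
        show (-(m:ℤ) - 2) = -((m + 1 : ℕ) : ℤ) - 1 by push_cast; ring,
        zF_negCast, zF_negCast, zF_negCast]
      rw [show (-((m + 2 : ℕ) : ℤ) - 1) = -((m + 3 : ℕ) : ℤ) by push_cast; ring,
        show (-((m + 1 : ℕ) : ℤ) - 1) = -((m + 2 : ℕ) : ℤ) by push_cast; ring,
        show (-(m:ℤ) - 1) = -((m + 1 : ℕ) : ℤ) by push_cast; ring,
        zpow_neg, zpow_neg, zpow_neg, zpow_natCast, zpow_natCast, zpow_natCast]
      rw [show bF x y (m + 2 + 1) = x * bF x y (m + 2) + y * bF x y (m + 1) from rfl,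
        show bF x y (m + 1 + 1) = x * bF x y (m + 1) + y * bF x y m from rfl]
      field_simp
      ring
    · interval_cases n
      · -- n = -1
        rw [show (-1 : ℤ) - 1 = -((1:ℕ) : ℤ) - 1 by norm_num,
          show (-1 : ℤ) + 1 = ((0 : ℕ) : ℤ) by norm_num,
          show (-1 : ℤ) = -((0:ℕ) : ℤ) - 1 by norm_num,
          zF_natCast, zF_negCast, zF_negCast]
        have hb2 : bF x y (1 + 1) = x := by
          show x * bF x y 1 + y * bF x y 0 = x
          show x * 1 + y * 0 = x
          ring
        rw [hb2]
        show (0 : K) = x * (-((-y) ^ (-(0:ℤ) - 1)) * bF x y (0 + 1)) +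
          y * (-((-y) ^ (-(1:ℤ) - 1)) * x)
        rw [show bF x y (0 + 1) = 1 from rfl,
          show (-(0:ℤ) - 1) = -((1:ℕ):ℤ) by norm_num,
          show (-(1:ℤ) - 1) = -((2:ℕ):ℤ) by norm_num,
          zpow_neg, zpow_neg, zpow_natCast, zpow_natCast]
        field_simp
        ring
      · -- n = 0
        rw [show (0 : ℤ) - 1 = -((0:ℕ) : ℤ) - 1 by norm_num,
          show (0 : ℤ) + 1 = ((1 : ℕ) : ℤ) by norm_num,
          zF_natCast, zF_negCast,
          show (0 : ℤ) = ((0 : ℕ) : ℤ) by norm_num, zF_natCast]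
        show (1 : K) = x * 0 + y * (-((-y) ^ (-(0:ℤ) - 1)) * bF x y (0 + 1))
        rw [show bF x y (0 + 1) = 1 from rfl,
          show (-(0:ℤ) - 1) = -((1:ℕ):ℤ) by norm_num,
          zpow_neg, zpow_natCast]
        field_simp
        simp

lemma H_step {K : Type*} [Field K] (x y : K) (hy : y ≠ 0) (a s : ℤ) :
    zF x y (a + 1) * zF x y (s - (a + 1)) + y * zF x y a * zF x y (s - (a + 1) - 1) =
      zF x y a * zF x y (s - a) + y * zF x y (a - 1) * zF x y (s - a - 1) := by
  have h1 := zF_rec x y hy a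
  have h2 := zF_rec x y hy (s - a - 1)
  rw [show s - a - 1 + 1 = s - a by ring, show s - a - 1 - 1 = s - a - 2 by ring] at h2
  rw [show s - (a + 1) - 1 = s - a - 2 by ring, show s - (a + 1) = s - a - 1 by ring,
    h1, h2]
  ring

lemma H_eq {K : Type*} [Field K] (x y : K) (hy : y ≠ 0) (k : ℤ) : ∀ a s : ℤ,
    zF x y (a + k) * zF x y (s - (a + k)) + y * zF x y (a + k - 1) * zF x y (s - (a + k) - 1) =
      zF x y a * zF x y (s - a) + y * zF x y (a - 1) * zF x y (s - a - 1) := by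
  induction k using Int.induction_on with
  | zero => intro a s; norm_num
  | succ k ih =>
    intro a s
    have h1 := H_step x y hy (a + k) s
    rw [show a + ((k : ℤ) + 1) = a + k + 1 by ring,
      show a + (k : ℤ) + 1 - 1 = a + k by ring]
    rw [h1]
    exact ih a s
  | pred k ih =>
    intro a s
    have h1 := H_step x y hy (a + (-(k : ℤ) - 1)) s
    rw [show a + (-(k:ℤ) - 1) + 1 = a + -(k:ℤ) by ring,
      show a + (-(k:ℤ) - 1) = a + -(k:ℤ) - 1 by ring] at h1
    rw [show a + (-(k:ℤ) - 1) = a + -(k:ℤ) - 1 by ring, ← h1]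
    exact ih a s

lemma one_step {K : Type*} [Field K] (x y : K) (hy : y ≠ 0)
    (a b c d : ℤ) (h : a + b = c + d) :
    zF x y a * zF x y b - zF x y c * zF x y d =
      -y * (zF x y (a - 1) * zF x y (b - 1) - zF x y (c - 1) * zF x y (d - 1)) := by
  have h1 := H_eq x y hy (c - a) a (a + b)
  rw [show a + (c - a) = c by ring, show a + b - c - 1 = d - 1 by omega,
    show a + b - c = d by omega, show a + b - a - 1 = b - 1 by ring,
    show a + b - a = b by ring] at h1
  linear_combination -h1

/-- Index-reduction formula: if a + b = c + d then
F_a F_b − F_c F_d = (−y)^r (F_{a−r} F_{b−r} − F_{c−r} F_{d−r}). -/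
theorem fib_index_reduction {K : Type*} [Field K] (x y : K) (hy : y ≠ 0)
    (a b c d r : ℤ) (h : a + b = c + d) :
    zF x y a * zF x y b - zF x y c * zF x y d =
      (-y) ^ r * (zF x y (a - r) * zF x y (b - r) - zF x y (c - r) * zF x y (d - r)) := by
  have hny : (-y) ≠ 0 := neg_ne_zero.mpr hy
  induction r using Int.induction_on with
  | zero => simp
  | succ k ih =>
    have hstep := one_step x y hy (a - k) (b - k) (c - k) (d - k) (by omega)
    rw [show a - ((k : ℤ) + 1) = a - k - 1 by ring, show b - ((k : ℤ) + 1) = b - k - 1 by ring,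
      show c - ((k : ℤ) + 1) = c - k - 1 by ring, show d - ((k : ℤ) + 1) = d - k - 1 by ring,
      zpow_add_one₀ hny]
    rw [ih, hstep]
    ring
  | pred k ih =>
    rw [show a - (-(k:ℤ) - 1) = a + k + 1 by ring, show b - (-(k:ℤ) - 1) = b + k + 1 by ring,
      show c - (-(k:ℤ) - 1) = c + k + 1 by ring, show d - (-(k:ℤ) - 1) = d + k + 1 by ring]
    rw [show a - -(k:ℤ) = a + k by ring, show b - -(k:ℤ) = b + k by ring,
      show c - -(k:ℤ) = c + k by ring, show d - -(k:ℤ) = d + k by ring] at ih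
    have hstep2 := one_step x y hy (a + k + 1) (b + k + 1) (c + k + 1) (d + k + 1) (by omega)
    rw [show a + (k:ℤ) + 1 - 1 = a + k by ring, show b + (k:ℤ) + 1 - 1 = b + k by ring,
      show c + (k:ℤ) + 1 - 1 = c + k by ring, show d + (k:ℤ) + 1 - 1 = d + k by ring] at hstep2
    have hz : (-y) ^ (-(k:ℤ) - 1) * (-y) = (-y) ^ (-(k:ℤ)) := by
      rw [← zpow_add_one₀ hny]
      norm_num
    rw [ih, hstep2, ← hz]
    ring
end

section
/- Pascal-type recurrence for bivariate s-Fibopolynomials: for s ≥ 1, n ≥ 1 and 1 ≤ k ≤ n−1, C(n,k)_{F_s} = F_{s(n−k)+1}(x,y)·C(n−1,k−1)_{F_s} + y·F_{sk−1}(x,y)·C(n−1,k)_{F_s}, where C(n,k)_{F_s} = (F_{sn}·F_{s(n−1)}···F_{s(n−k+1)})/(F_s·F_{2s}···F_{ks}) (all arguments (x,y)). -/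
/-- The bivariate s-Fibopolynomial
C(n,k)_{F_s} = ∏_{i=0}^{k-1} F_{s(n-i)} / ∏_{i=1}^{k} F_{si}. -/
noncomputable def fibo {K : Type*} [Field K] (x y : K) (s n k : ℕ) : K :=
  (∏ i ∈ Finset.range k, bF x y (s * (n - i))) / ∏ i ∈ Finset.range k, bF x y (s * (i + 1))

/-- The field ℚ(x,y) of rational functions in two variables. -/
noncomputable abbrev RF2 : Type := FractionRing (MvPolynomial (Fin 2) ℚ)

noncomputable def Xv : RF2 := algebraMap (MvPolynomial (Fin 2) ℚ) RF2 (MvPolynomial.X 0)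
noncomputable def Yv : RF2 := algebraMap (MvPolynomial (Fin 2) ℚ) RF2 (MvPolynomial.X 1)

/-- Polynomial lift of the bivariate Fibonacci polynomials. -/
noncomputable def fpoly : ℕ → MvPolynomial (Fin 2) ℚ
  | 0 => 0
  | 1 => 1
  | n + 2 => MvPolynomial.X 0 * fpoly (n + 1) + MvPolynomial.X 1 * fpoly n

lemma bF_eq_map : ∀ m, bF Xv Yv m = algebraMap (MvPolynomial (Fin 2) ℚ) RF2 (fpoly m) := by
  intro m
  induction m using Nat.twoStepInduction with
  | zero => simp [bF, fpoly]
  | one => simp [bF, fpoly]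
  | more n ih1 ih2 =>
    show Xv * bF Xv Yv (n + 1) + Yv * bF Xv Yv n = _
    rw [ih1, ih2, show fpoly (n+2) = MvPolynomial.X 0 * fpoly (n+1) + MvPolynomial.X 1 * fpoly n
      from rfl, map_add, map_mul, map_mul, Xv, Yv]

lemma fpoly_eval_pos : ∀ m, (0 ≤ MvPolynomial.eval (fun _ => (1:ℚ)) (fpoly m)) ∧
    (1 ≤ m → 1 ≤ MvPolynomial.eval (fun _ => (1:ℚ)) (fpoly m)) := by
  intro m
  induction m using Nat.twoStepInduction with
  | zero => simp [fpoly]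
  | one => simp [fpoly]
  | more n ih1 ih2 =>
    have h1 := ih1.1
    have h2 := ih2.2 (by omega)
    rw [show fpoly (n+2) = MvPolynomial.X 0 * fpoly (n+1) + MvPolynomial.X 1 * fpoly n from rfl]
    simp only [map_add, map_mul, MvPolynomial.eval_X]
    constructor
    · nlinarith
    · intro _; nlinarith

lemma bF_ne_zero {m : ℕ} (hm : 1 ≤ m) : bF Xv Yv m ≠ 0 := by
  rw [bF_eq_map]
  intro h
  have h0 : fpoly m = 0 := by
    have hinj := IsFractionRing.injective (MvPolynomial (Fin 2) ℚ) RF2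
    exact hinj (by simpa using h)
  have := (fpoly_eval_pos m).2 hm
  rw [h0] at this
  simp at this
  linarith

/-- Addition formula: F_{m+h+1} = F_{m+1} F_{h+1} + y F_m F_h. -/
lemma bF_add {K : Type*} [Field K] (x y : K) : ∀ m h,
    bF x y (m + h + 1) = bF x y (m + 1) * bF x y (h + 1) + y * bF x y m * bF x y h := by
  intro m
  induction m using Nat.twoStepInduction with
  | zero => intro h; simp [bF]
  | one =>
    intro h
    rw [show 1 + h + 1 = h + 2 from by omega,
      show bF x y (h + 2) = x * bF x y (h + 1) + y * bF x y h from rfl,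
      show (1:ℕ) + 1 = 0 + 2 from rfl,
      show bF x y (0 + 2) = x * bF x y 1 + y * bF x y 0 from rfl,
      show bF x y 1 = 1 from rfl, show bF x y 0 = 0 from rfl]
    ring
  | more n ih1 ih2 =>
    intro h
    have h2 := ih2 h
    have h1 := ih1 h
    rw [show n + 1 + 1 = n + 2 from rfl] at h2
    have e0 : bF x y (n + 2 + h + 1) = x * bF x y (n + 1 + h + 1) + y * bF x y (n + h + 1) := by
      rw [show n + 2 + h + 1 = (n + h + 1) + 2 from by omega]
      show x * bF x y (n + h + 1 + 1) + y * bF x y (n + h + 1) = _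
      congr 3
      omega
    have e3 : bF x y (n + 2 + 1) = x * bF x y (n + 2) + y * bF x y (n + 1) := by
      rw [show n + 2 + 1 = (n + 1) + 2 from by omega]
      rfl
    have e4 : bF x y (n + 2) = x * bF x y (n + 1) + y * bF x y n := rfl
    rw [e0, h2, h1, e3, e4]
    ring

/-- Pascal-type recurrence:
C(n,k)_{F_s} = F_{s(n−k)+1}·C(n−1,k−1)_{F_s} + y·F_{sk−1}·C(n−1,k)_{F_s}. -/
theorem fibo_pascal_recurrence (s n k : ℕ) (hs : 1 ≤ s) (hn : 1 ≤ n)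
    (hk1 : 1 ≤ k) (hk2 : k ≤ n - 1) :
    fibo Xv Yv s n k =
      bF Xv Yv (s * (n - k) + 1) * fibo Xv Yv s (n - 1) (k - 1) +
        Yv * bF Xv Yv (s * k - 1) * fibo Xv Yv s (n - 1) k := by
  have hkn : k ≤ n - 1 := hk2
  have hnk : 1 ≤ n - k := by omega
  have hsk : 1 ≤ s * k := Nat.one_le_iff_ne_zero.mpr (by positivity)
  have hmuladd : s * (n - k) + s * k = s * n := by
    rw [← Nat.mul_add]; congr 1; omega
  set A := ∏ i ∈ Finset.range (k-1), bF Xv Yv (s * (n - 1 - i)) with hA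
  set D := ∏ i ∈ Finset.range (k-1), bF Xv Yv (s * (i + 1)) with hD
  have hnum : (∏ i ∈ Finset.range k, bF Xv Yv (s * (n - i))) = bF Xv Yv (s * n) * A := by
    rw [show k = (k-1)+1 from by omega, Finset.prod_range_succ', Nat.sub_zero, mul_comm]
    congr 1
    apply Finset.prod_congr rfl
    intro i _
    congr 2
    omega
  have hden : (∏ i ∈ Finset.range k, bF Xv Yv (s * (i + 1))) = D * bF Xv Yv (s * k) := by
    rw [show k = (k-1)+1 from by omega, Finset.prod_range_succ]
  have hnum' : (∏ i ∈ Finset.range k, bF Xv Yv (s * (n - 1 - i)))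
      = A * bF Xv Yv (s * (n - k)) := by
    rw [show k = (k-1)+1 from by omega, Finset.prod_range_succ]
    have e : n - 1 - (k - 1) = n - ((k-1)+1) := by omega
    rw [e]
  have hDne : D ≠ 0 := by
    rw [hD]
    apply Finset.prod_ne_zero_iff.mpr
    intro i _
    exact bF_ne_zero (by nlinarith)
  have hFk : bF Xv Yv (s * k) ≠ 0 := bF_ne_zero hsk
  have hadd : bF Xv Yv (s * n) =
      bF Xv Yv (s * (n - k) + 1) * bF Xv Yv (s * k) +
        Yv * bF Xv Yv (s * (n - k)) * bF Xv Yv (s * k - 1) := by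
    have h0 := bF_add Xv Yv (s * (n - k)) (s * k - 1)
    rw [show s * (n - k) + (s * k - 1) + 1 = s * n from by omega,
      show s * k - 1 + 1 = s * k from by omega] at h0
    exact h0
  rw [fibo, fibo, fibo, hnum, hden, hnum', ← hA, ← hD, hadd]
  field_simp
end

section
/- Let α = (x + √(x²+4y))/2 and β = (x − √(x²+4y))/2 (in a suitable extension, or work formally). For every s ≥ 1 and k ≥ 0, (−1)^{s+1} ∏_{j=0}^{k} ( z − α^{sj} β^{s(k−j)} ) = Σ_{i=0}^{k+1} (−1)^{(si+2(s+1))(i+1)/2} · C(k+1,i)_{F_s(x,y)} · y^{si(i−1)/2} · z^{k+1−i}, where C(m,i)_{F_s} denotes the bivariate s-Fibopolynomial coefficient. -/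
/-- The field ℚ(α,β,z) of rational functions in three variables. -/
noncomputable abbrev RF3 : Type := FractionRing (MvPolynomial (Fin 3) ℚ)

noncomputable def av : RF3 := algebraMap (MvPolynomial (Fin 3) ℚ) RF3 (MvPolynomial.X 0)
noncomputable def bv : RF3 := algebraMap (MvPolynomial (Fin 3) ℚ) RF3 (MvPolynomial.X 1)
noncomputable def zv : RF3 := algebraMap (MvPolynomial (Fin 3) ℚ) RF3 (MvPolynomial.X 2)

lemma key_ne : ∀ m : ℕ, 1 ≤ m → av ^ m - bv ^ m ≠ 0 := by
  intro m hm h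
  have h2 : algebraMap (MvPolynomial (Fin 3) ℚ) RF3
      (MvPolynomial.X 0 ^ m - MvPolynomial.X 1 ^ m) = 0 := by
    rw [map_sub, map_pow, map_pow]; exact h
  rw [IsFractionRing.to_map_eq_zero_iff] at h2
  have h3 := congrArg (MvPolynomial.eval fun j : Fin 3 => if j = 0 then (1 : ℚ) else 0) h2
  simp [zero_pow (by omega : m ≠ 0)] at h3

lemma bv_ne : bv ≠ 0 := by
  intro h
  rw [bv, IsFractionRing.to_map_eq_zero_iff] at h
  have h3 := congrArg (MvPolynomial.eval fun j : Fin 3 => if j = 1 then (1 : ℚ) else 0) h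
  simp at h3

lemma hd_ne : av - bv ≠ 0 := by simpa using key_ne 1 le_rfl

lemma bF_closed (n : ℕ) : bF (av + bv) (-(av * bv)) n = (av ^ n - bv ^ n) / (av - bv) := by
  induction n using Nat.twoStepInduction with
  | zero => simp [bF]
  | one => simp [bF, div_self hd_ne]
  | more n ih1 ih2 =>
    show (av + bv) * bF (av + bv) (-(av * bv)) (n + 1)
        + (-(av * bv)) * bF (av + bv) (-(av * bv)) n = _
    rw [ih1, ih2]
    field_simp
    ring


noncomputable def qG {K : Type*} [Field K] (a b : K) (n i : ℕ) : K :=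
  (∏ j ∈ Finset.range i, (a ^ (n - j) - b ^ (n - j))) /
    (∏ j ∈ Finset.range i, (a ^ (j + 1) - b ^ (j + 1)))

section QBin
variable {K : Type*} [Field K] (a b : K)

lemma qG_denom_ne (H : ∀ m, 1 ≤ m → a ^ m - b ^ m ≠ 0) (i : ℕ) :
    (∏ j ∈ Finset.range i, (a ^ (j + 1) - b ^ (j + 1))) ≠ 0 :=
  Finset.prod_ne_zero_iff.mpr fun j _ => H (j + 1) (Nat.succ_le_succ (Nat.zero_le _))

lemma qG_zero (n : ℕ) : qG a b n 0 = 1 := by simp [qG]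

lemma qG_self_succ (n : ℕ) : qG a b n (n + 1) = 0 := by
  have h0 : (∏ j ∈ Finset.range (n + 1), (a ^ (n - j) - b ^ (n - j))) = 0 :=
    Finset.prod_eq_zero (Finset.self_mem_range_succ n) (by simp)
  simp [qG, h0]

lemma qG_pascal (H : ∀ m, 1 ≤ m → a ^ m - b ^ m ≠ 0) {n i : ℕ} (h : i ≤ n) :
    qG a b (n + 1) (i + 1) = b ^ (i + 1) * qG a b n (i + 1) + a ^ (n - i) * qG a b n i := by
  have hDne : (∏ j ∈ Finset.range i, (a ^ (j + 1) - b ^ (j + 1))) ≠ 0 := qG_denom_ne a b H i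
  have hwne : a ^ (i + 1) - b ^ (i + 1) ≠ 0 := H (i + 1) (by omega)
  have hnum1 : (∏ j ∈ Finset.range (i + 1), (a ^ (n + 1 - j) - b ^ (n + 1 - j)))
      = (∏ j ∈ Finset.range i, (a ^ (n - j) - b ^ (n - j))) * (a ^ (n + 1) - b ^ (n + 1)) := by
    rw [Finset.prod_range_succ']
    simp only [Nat.succ_sub_succ_eq_sub, Nat.sub_zero]
  have hnum2 : (∏ j ∈ Finset.range (i + 1), (a ^ (n - j) - b ^ (n - j)))
      = (∏ j ∈ Finset.range i, (a ^ (n - j) - b ^ (n - j))) * (a ^ (n - i) - b ^ (n - i)) :=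
    Finset.prod_range_succ _ _
  have hden : (∏ j ∈ Finset.range (i + 1), (a ^ (j + 1) - b ^ (j + 1)))
      = (∏ j ∈ Finset.range i, (a ^ (j + 1) - b ^ (j + 1))) * (a ^ (i + 1) - b ^ (i + 1)) :=
    Finset.prod_range_succ _ _
  have key : a ^ (n + 1) - b ^ (n + 1)
      = b ^ (i + 1) * (a ^ (n - i) - b ^ (n - i)) + a ^ (n - i) * (a ^ (i + 1) - b ^ (i + 1)) := by
    have h1 : a ^ (n - i) * a ^ (i + 1) = a ^ (n + 1) := by rw [← pow_add]; congr 1; omega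
    have h2 : b ^ (i + 1) * b ^ (n - i) = b ^ (n + 1) := by rw [← pow_add]; congr 1; omega
    linear_combination h2 - h1
  unfold qG
  rw [hnum1, hnum2, hden, key]
  field_simp

lemma tri_succ (i : ℕ) : (i + 1) * (i + 1 - 1) / 2 = i * (i - 1) / 2 + i := by
  cases i with
  | zero => rfl
  | succ j =>
    have h : (j + 1 + 1) * (j + 1 + 1 - 1) = (j + 1) * j + 2 * (j + 1) := by
      simp only [Nat.add_sub_cancel]; ring
    rw [h, Nat.succ_sub_one, Nat.add_mul_div_left _ _ (by norm_num : 0 < 2)]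

lemma qbin (H : ∀ m, 1 ≤ m → a ^ m - b ^ m ≠ 0) (hb : b ≠ 0) (k : ℕ) (z : K) :
    ∏ j ∈ Finset.range (k + 1), (z - a ^ j * b ^ (k - j)) =
      ∑ i ∈ Finset.range (k + 2),
        (-1 : K) ^ i * qG a b (k + 1) i * (a * b) ^ (i * (i - 1) / 2) * z ^ (k + 1 - i) := by
  induction k generalizing z with
  | zero =>
    have h11 : qG a b 1 1 = 1 := by
      rw [qG]
      simp only [Finset.prod_range_one, Nat.sub_zero, Nat.zero_add, pow_one]
      exact div_self (by simpa using H 1 le_rfl)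
    simp [Finset.sum_range_succ, h11, qG_zero]
    ring
  | succ k ih =>
    have step1 : ∏ j ∈ Finset.range (k + 2), (z - a ^ j * b ^ (k + 1 - j))
        = (∏ j ∈ Finset.range (k + 1), (z - a ^ j * b ^ (k + 1 - j))) * (z - a ^ (k + 1)) := by
      rw [Finset.prod_range_succ]; simp
    have step2 : ∏ j ∈ Finset.range (k + 1), (z - a ^ j * b ^ (k + 1 - j))
        = b ^ (k + 1) * ∏ j ∈ Finset.range (k + 1), (z / b - a ^ j * b ^ (k - j)) := by
      have hterm : ∀ j ∈ Finset.range (k + 1),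
          z - a ^ j * b ^ (k + 1 - j) = b * (z / b - a ^ j * b ^ (k - j)) := by
        intro j hj
        have hj' : j ≤ k := Nat.lt_succ_iff.mp (Finset.mem_range.mp hj)
        have hbb : b * b ^ (k - j) = b ^ (k + 1 - j) := by
          rw [← pow_succ']; congr 1; omega
        rw [mul_sub, mul_div_cancel₀ _ hb, mul_left_comm, hbb]
      rw [Finset.prod_congr rfl hterm, Finset.prod_mul_distrib, Finset.prod_const,
        Finset.card_range]
    have step3 : b ^ (k + 1) * (∑ i ∈ Finset.range (k + 2),
          (-1 : K) ^ i * qG a b (k + 1) i * (a * b) ^ (i * (i - 1) / 2) * (z / b) ^ (k + 1 - i))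
        = ∑ i ∈ Finset.range (k + 2),
          (-1 : K) ^ i * qG a b (k + 1) i * (a * b) ^ (i * (i - 1) / 2) * b ^ i * z ^ (k + 1 - i) := by
      rw [Finset.mul_sum]
      refine Finset.sum_congr rfl fun i hi => ?_
      have hi' : i ≤ k + 1 := Nat.lt_succ_iff.mp (Finset.mem_range.mp hi)
      have hbb : b ^ (k + 1) = b ^ i * b ^ (k + 1 - i) := by rw [← pow_add]; congr 1; omega
      rw [div_pow, hbb]
      field_simp
    rw [step1, step2, ih (z / b), step3, mul_sub]
    have hSz : (∑ i ∈ Finset.range (k + 2),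
          (-1 : K) ^ i * qG a b (k + 1) i * (a * b) ^ (i * (i - 1) / 2) * b ^ i * z ^ (k + 1 - i)) * z
        = z ^ (k + 2) + ∑ i ∈ Finset.range (k + 2),
            (-1 : K) ^ (i + 1) * qG a b (k + 1) (i + 1) * (a * b) ^ ((i + 1) * (i + 1 - 1) / 2)
              * b ^ (i + 1) * z ^ (k + 1 - i) := by
      rw [Finset.sum_mul, Finset.sum_range_succ']
      conv_rhs => rw [Finset.sum_range_succ]
      have hlast : (-1 : K) ^ (k + 1 + 1) * qG a b (k + 1) (k + 1 + 1)
          * (a * b) ^ ((k + 1 + 1) * (k + 1 + 1 - 1) / 2) * b ^ (k + 1 + 1)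
          * z ^ (k + 1 - (k + 1)) = 0 := by
        rw [qG_self_succ]; ring
      rw [hlast, add_zero, add_comm]
      congr 1
      · simp [qG_zero, pow_succ]
      · refine Finset.sum_congr rfl fun i hi => ?_
        have hi' : i ≤ k := Nat.lt_succ_iff.mp (Finset.mem_range.mp hi)
        have hz : z ^ (k + 1 - (i + 1)) * z = z ^ (k + 1 - i) := by
          rw [← pow_succ]; congr 1; omega
        rw [mul_assoc, hz]
    have hSa : (∑ i ∈ Finset.range (k + 2),
          (-1 : K) ^ i * qG a b (k + 1) i * (a * b) ^ (i * (i - 1) / 2) * b ^ i * z ^ (k + 1 - i))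
            * a ^ (k + 1)
        = ∑ i ∈ Finset.range (k + 2),
            (-1 : K) ^ i * qG a b (k + 1) i * (a * b) ^ (i * (i - 1) / 2) * b ^ i * a ^ (k + 1)
              * z ^ (k + 1 - i) := by
      rw [Finset.sum_mul]
      exact Finset.sum_congr rfl fun i _ => by ring
    rw [hSz, hSa, add_sub_assoc, ← Finset.sum_sub_distrib]
    conv_rhs => rw [Finset.sum_range_succ']
    have hD0 : (-1 : K) ^ 0 * qG a b (k + 1 + 1) 0 * (a * b) ^ (0 * (0 - 1) / 2)
        * z ^ (k + 1 + 1 - 0) = z ^ (k + 2) := by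
      simp [qG_zero]
    rw [hD0, add_comm]
    congr 1
    refine Finset.sum_congr rfl fun i hi => ?_
    have hi' : i ≤ k + 1 := Nat.lt_succ_iff.mp (Finset.mem_range.mp hi)
    have hp := qG_pascal a b H (show i ≤ k + 1 from hi')
    have hsub : k + 1 + 1 - (i + 1) = k + 1 - i := by omega
    rw [hsub, hp, tri_succ]
    have h1 : (a * b) ^ (i * (i - 1) / 2 + i) = (a * b) ^ (i * (i - 1) / 2) * (a ^ i * b ^ i) := by
      rw [pow_add]; ring
    have h2 : a ^ i * a ^ (k + 1 - i) = a ^ (k + 1) := by rw [← pow_add]; congr 1; omega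
    rw [h1]
    linear_combination ((-1 : K) ^ i * qG a b (k + 1) i * (a * b) ^ (i * (i - 1) / 2)
      * b ^ i * z ^ (k + 1 - i)) * h2

end QBin

lemma fibo_eq_qG (s n i : ℕ) :
    fibo (av + bv) (-(av * bv)) s n i = qG (av ^ s) (bv ^ s) n i := by
  have hterm : ∀ m : ℕ, bF (av + bv) (-(av * bv)) (s * m)
      = ((av ^ s) ^ m - (bv ^ s) ^ m) / (av - bv) := by
    intro m; rw [bF_closed, pow_mul, pow_mul]
  unfold fibo qG
  rw [Finset.prod_congr rfl fun j _ => hterm (n - j),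
    Finset.prod_congr rfl fun j _ => hterm (j + 1),
    Finset.prod_div_distrib, Finset.prod_div_distrib, Finset.prod_const, Finset.card_range,
    div_div_div_comm, div_self (pow_ne_zero i hd_ne), div_one]

lemma parity_aux (s i : ℕ) :
    Even ((s * i + 2 * (s + 1)) * (i + 1) / 2 + s * i * (i - 1) / 2 + (s + 1 + i)) := by
  obtain ⟨m, hm⟩ := Nat.even_mul_succ_self i
  obtain ⟨p, hp⟩ : ∃ p, i * (i - 1) = p + p := by
    cases i with
    | zero => exact ⟨0, rfl⟩
    | succ j =>
      obtain ⟨q, hq⟩ := Nat.even_mul_succ_self j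
      exact ⟨q, by rw [Nat.succ_sub_one, Nat.mul_comm]; exact hq⟩
  have hE1 : (s * i + 2 * (s + 1)) * (i + 1) / 2 = s * m + (s + 1) * (i + 1) := by
    have h : (s * i + 2 * (s + 1)) * (i + 1) = 2 * (s * m + (s + 1) * (i + 1)) := by
      have h' : (s * i + 2 * (s + 1)) * (i + 1)
          = s * (i * (i + 1)) + 2 * ((s + 1) * (i + 1)) := by ring
      rw [h', hm]; ring
    omega
  have hE2 : s * i * (i - 1) / 2 = s * p := by
    have h : s * i * (i - 1) = 2 * (s * p) := by rw [mul_assoc, hp]; ring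
    omega
  have hmp : m = p + i := by
    have h : i * (i + 1) = i * (i - 1) + 2 * i := by
      cases i with
      | zero => rfl
      | succ j => rw [Nat.succ_sub_one]; ring
    omega
  rw [hE1, hE2, hmp]
  exact ⟨s * p + s * i + s + i + 1, by ring⟩

lemma neg_one_pow_congr' {m n : ℕ} (h : Even (m + n)) : ((-1 : RF3)) ^ m = (-1) ^ n := by
  have h2 := Nat.even_add.mp h
  rcases Nat.even_or_odd m with hm | hm
  · rw [hm.neg_one_pow, (h2.mp hm).neg_one_pow]
  · have hn : Odd n := Nat.not_even_iff_odd.mp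
      fun he => (Nat.not_even_iff_odd.mpr hm) (h2.mpr he)
    rw [hm.neg_one_pow, hn.neg_one_pow]

/-- With α + β = x and αβ = −y (here formally: x := α+β, y := −αβ),
(−1)^{s+1} ∏_{j=0}^{k} (z − α^{sj} β^{s(k−j)})
  = Σ_{i=0}^{k+1} (−1)^{(si+2(s+1))(i+1)/2} C(k+1,i)_{F_s(x,y)} y^{si(i−1)/2} z^{k+1−i}. -/
theorem fibopolynomial_root_factorization (s k : ℕ) (hs : 1 ≤ s) :
    (-1 : RF3) ^ (s + 1) *
        ∏ j ∈ Finset.range (k + 1), (zv - av ^ (s * j) * bv ^ (s * (k - j))) =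
      ∑ i ∈ Finset.range (k + 2),
        (-1 : RF3) ^ (((s * i + 2 * (s + 1)) * (i + 1)) / 2) *
          fibo (av + bv) (-(av * bv)) s (k + 1) i *
            (-(av * bv)) ^ ((s * i * (i - 1)) / 2) * zv ^ (k + 1 - i) := by
  have H : ∀ m, 1 ≤ m → (av ^ s) ^ m - (bv ^ s) ^ m ≠ 0 := by
    intro m hm
    rw [← pow_mul, ← pow_mul]
    refine key_ne (s * m) ?_
    have := Nat.mul_le_mul hs hm
    simpa using this
  have hbs : bv ^ s ≠ 0 := pow_ne_zero _ bv_ne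
  simp only [pow_mul]
  rw [qbin (av ^ s) (bv ^ s) H hbs k zv, Finset.mul_sum]
  refine Finset.sum_congr rfl fun i hi => ?_
  rw [fibo_eq_qG]
  have hAB : ((av ^ s) * (bv ^ s)) ^ (i * (i - 1) / 2) = (av * bv) ^ (s * i * (i - 1) / 2) := by
    rw [← mul_pow, ← pow_mul]
    congr 1
    obtain ⟨p, hp⟩ : ∃ p, i * (i - 1) = p + p := by
      cases i with
      | zero => exact ⟨0, rfl⟩
      | succ j =>
        obtain ⟨q, hq⟩ := Nat.even_mul_succ_self j
        exact ⟨q, by rw [Nat.succ_sub_one, Nat.mul_comm]; exact hq⟩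
    have h1 : i * (i - 1) / 2 = p := by omega
    have h2 : s * i * (i - 1) = 2 * (s * p) := by rw [mul_assoc, hp]; ring
    rw [h1, h2, Nat.mul_div_cancel_left _ (by norm_num : 0 < 2)]
  have hneg : (-(av * bv)) ^ (s * i * (i - 1) / 2)
      = (-1 : RF3) ^ (s * i * (i - 1) / 2) * (av * bv) ^ (s * i * (i - 1) / 2) := by
    rw [neg_pow]
  have hs2 : (-1 : RF3) ^ ((s * i + 2 * (s + 1)) * (i + 1) / 2) * (-1) ^ (s * i * (i - 1) / 2)
      = (-1 : RF3) ^ (s + 1) * (-1) ^ i := by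
    rw [← pow_add, ← pow_add]
    exact neg_one_pow_congr' (parity_aux s i)
  rw [hneg, hAB]
  linear_combination (-(qG (av ^ s) (bv ^ s) (k + 1) i * (av * bv) ^ (s * i * (i - 1) / 2)
    * zv ^ (k + 1 - i))) * hs2
end
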